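/- Consider the explicit upwind density update on a finite graph: ρ_i^{m+1} = ρ_i^m − τ Σ_{j ∈ N(i)} √(ω_{ij}) ( (v_{i,j}^m)^+ ρ_i^m − (v_{i,j}^m)^- ρ_j^m ), where (x)^+ = max(x,0) and (x)^- = max(−x,0). If ρ^m ≥ 0 componentwise and the time step satisfies τ Σ_{j ∈ N(i)} √(ω_{ij}) (v_{i,j}^m)^+ ≤ 1 for every node i, then ρ^{m+1} ≥ 0 componentwise. -/
import Mathlib


open Finset

/-- **Non-negativity preservation of the upwind density update under a CFL condition.**
For the explicit upwind update
`ρ' i = ρ i − τ ∑_{j ∈ N i} √(ω i j) ((v i j)⁺ ρ i − (v i j)⁻ ρ j)`,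
if `ρ ≥ 0` componentwise and `τ ∑_{j ∈ N i} √(ω i j) (v i j)⁺ ≤ 1` for every
node `i`, then `ρ' ≥ 0` componentwise. -/
theorem stmt_2 {V : Type*} [Fintype V] [DecidableEq V]
    (N : V → Finset V) (ω : V → V → ℝ) (v : V → V → ℝ)
    (ρ ρ' : V → ℝ) (τ : ℝ) (hτ : 0 < τ)
    (hωpos : ∀ i j, j ∈ N i → 0 < ω i j)
    (hρ : ∀ i, 0 ≤ ρ i)
    (hCFL : ∀ i, τ * ∑ j ∈ N i, Real.sqrt (ω i j) * max (v i j) 0 ≤ 1)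
    (hupdate : ∀ i, ρ' i = ρ i - τ * ∑ j ∈ N i,
      Real.sqrt (ω i j) * (max (v i j) 0 * ρ i - max (-(v i j)) 0 * ρ j)) :
    ∀ i, 0 ≤ ρ' i := by
  intro i
  have key : ρ' i = ρ i * (1 - τ * ∑ j ∈ N i, Real.sqrt (ω i j) * max (v i j) 0)
      + τ * ∑ j ∈ N i, Real.sqrt (ω i j) * max (-(v i j)) 0 * ρ j := by
    rw [hupdate i]
    simp only [mul_sub, Finset.sum_sub_distrib, Finset.mul_sum, Finset.sum_mul]
    ring_nf
  rw [key]
  have h1 : 0 ≤ ρ i * (1 - τ * ∑ j ∈ N i, Real.sqrt (ω i j) * max (v i j) 0) :=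
    mul_nonneg (hρ i) (by linarith [hCFL i])
  have h2 : 0 ≤ ∑ j ∈ N i, Real.sqrt (ω i j) * max (-(v i j)) 0 * ρ j := by
    apply Finset.sum_nonneg
    intro j _
    exact mul_nonneg (mul_nonneg (Real.sqrt_nonneg _) (le_max_right _ _)) (hρ j)
  nlinarith
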